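/- arXiv:2302.04610 — 2 statements merged into one kernel-verified Lean document; each statement's English description precedes it below -/
import Mathlib

section
/- Let (X,d_X) and (Y,d_Y) be complete separable metric spaces. Let μ_c, μ_a be Borel probability measures on X and ν_c, ν_a be Borel probability measures on Y, let ε_1, ε_2 ∈ [0,1], and set μ = (1−ε_1)μ_c + ε_1 μ_a and ν = (1−ε_2)ν_c + ε_2 ν_a. Assume KL(μ_a,μ_c) and KL(ν_a,ν_c) are finite and strictly positive, and KL(μ_c,μ_a) and KL(ν_c,ν_a) are finite. If ρ_1 = ε_1·KL(μ_a,μ_c) and ρ_2 = ε_2·KL(ν_a,ν_c), then for all τ_1, τ_2 ≥ 0: GW^rob_{ρ_1,ρ_2}(μ,ν) ≤ GW(μ_c,ν_c). -/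
open MeasureTheory ENNReal Classical

/-- Kullback–Leibler divergence between two measures: `∫ log (dρ/dσ) dρ` when `ρ ≪ σ`
and the log-likelihood ratio is integrable, and `∞` otherwise. -/
noncomputable def KLdiv {X : Type*} [MeasurableSpace X] (ρ σ : Measure X) : ℝ≥0∞ :=
  if ρ ≪ σ ∧ Integrable (llr ρ σ) ρ then ENNReal.ofReal (∫ x, llr ρ σ x ∂ρ) else ⊤

/-- Generalized Kullback–Leibler divergence between finite positive measures:
`∫ log (dρ/dσ) dρ - ρ(X) + σ(X)` when `ρ ≪ σ` (and the integral is finite), `∞` otherwise. -/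
noncomputable def GKLdiv {X : Type*} [MeasurableSpace X] (ρ σ : Measure X) : ℝ≥0∞ :=
  if ρ ≪ σ ∧ Integrable (llr ρ σ) ρ then
    ENNReal.ofReal (∫ x, llr ρ σ x ∂ρ - (ρ Set.univ).toReal + (σ Set.univ).toReal) else ⊤

/-- The Gromov–Wasserstein transportation cost of a plan `π`:
`∬ |d_X(x,x') - d_Y(y,y')|² dπ dπ`. -/
noncomputable def GWcost {X Y : Type*} [MetricSpace X] [MetricSpace Y]
    [MeasurableSpace X] [MeasurableSpace Y] (π : Measure (X × Y)) : ℝ≥0∞ :=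
  ∫⁻ p, ∫⁻ q, ENNReal.ofReal (|dist p.1 q.1 - dist p.2 q.2| ^ 2) ∂π ∂π

/-- The Gromov–Wasserstein value: infimum of the cost over couplings of `μ` and `ν`. -/
noncomputable def GW {X Y : Type*} [MetricSpace X] [MetricSpace Y]
    [MeasurableSpace X] [MeasurableSpace Y] (μ : Measure X) (ν : Measure Y) : ℝ≥0∞ :=
  ⨅ (π : Measure (X × Y)) (_ : π.map Prod.fst = μ) (_ : π.map Prod.snd = ν), GWcost π

/-- `F(α,β)`: infimum over finite positive measures `π` on `X × Y` of the GW cost plus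
KL penalties `τ₁ GKL(π₁, α) + τ₂ GKL(π₂, β)` on the marginals. -/
noncomputable def Fobj {X Y : Type*} [MetricSpace X] [MetricSpace Y]
    [MeasurableSpace X] [MeasurableSpace Y] (τ₁ τ₂ : ℝ)
    (α : Measure X) (β : Measure Y) : ℝ≥0∞ :=
  ⨅ (π : Measure (X × Y)) (_ : IsFiniteMeasure π),
    GWcost π + ENNReal.ofReal τ₁ * GKLdiv (π.map Prod.fst) α
      + ENNReal.ofReal τ₂ * GKLdiv (π.map Prod.snd) β

/-- The robust Gromov–Wasserstein value `GW^rob_{ρ₁,ρ₂}(μ,ν)`. -/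
noncomputable def GWrob {X Y : Type*} [MetricSpace X] [MetricSpace Y]
    [MeasurableSpace X] [MeasurableSpace Y] (ρ₁ ρ₂ τ₁ τ₂ : ℝ)
    (μ : Measure X) (ν : Measure Y) : ℝ≥0∞ :=
  ⨅ (α : Measure X) (_ : IsProbabilityMeasure α) (_ : KLdiv μ α ≤ ENNReal.ofReal ρ₁)
    (β : Measure Y) (_ : IsProbabilityMeasure β) (_ : KLdiv ν β ≤ ENNReal.ofReal ρ₂),
    Fobj τ₁ τ₂ α β

lemma sub_one_le_mul_log {t : ℝ} (ht : 0 ≤ t) : t - 1 ≤ t * Real.log t := by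
  rcases eq_or_lt_of_le ht with h | h
  · simp [← h]
  · have h1 : Real.log t⁻¹ ≤ t⁻¹ - 1 := Real.log_le_sub_one_of_pos (by positivity)
    rw [Real.log_inv] at h1
    have := mul_le_mul_of_nonneg_left h1 ht
    rw [mul_sub, mul_inv_cancel₀ h.ne'] at this
    nlinarith

lemma KLdiv_mix {X : Type*} [MeasurableSpace X] (μc μa : Measure X)
    [IsProbabilityMeasure μc] [IsProbabilityMeasure μa]
    {ε : ℝ} (hε0 : 0 ≤ ε) (hε1 : ε ≤ 1) (h : KLdiv μa μc ≠ ⊤) :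
    KLdiv (ENNReal.ofReal (1 - ε) • μc + ENNReal.ofReal ε • μa) μc
      ≤ ENNReal.ofReal (ε * (KLdiv μa μc).toReal) := by
  have hcond : μa ≪ μc ∧ Integrable (llr μa μc) μa := by
    by_contra hc
    rw [KLdiv, if_neg hc] at h
    exact h rfl
  set f := μa.rnDeriv μc with hf_def
  have hf_meas : Measurable f := Measure.measurable_rnDeriv μa μc
  set g : X → ℝ≥0∞ := fun x => ENNReal.ofReal (1 - ε) + ENNReal.ofReal ε * f x with hg_def
  have hg_meas : Measurable g := measurable_const.add (hf_meas.const_mul _)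
  set μ := ENNReal.ofReal (1 - ε) • μc + ENNReal.ofReal ε • μa with hμ_def
  have hrepr : μ = μc.withDensity g := by
    have h1 : μc.withDensity g
        = μc.withDensity (fun _ => ENNReal.ofReal (1 - ε)) + μc.withDensity (fun x => ENNReal.ofReal ε * f x) :=
      withDensity_add_left measurable_const _
    have h2 : μc.withDensity (fun x => ENNReal.ofReal ε * f x) = ENNReal.ofReal ε • μc.withDensity f := by
      rw [← withDensity_smul _ hf_meas]; rfl
    rw [h1, h2, withDensity_const, Measure.withDensity_rnDeriv_eq μa μc hcond.1]
  have hac : μ ≪ μc := by rw [hrepr]; exact withDensity_absolutelyContinuous _ _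
  have hfin : IsFiniteMeasure μ := by
    constructor
    rw [hμ_def]
    simp [lt_top_iff_ne_top]
  set F : X → ℝ := fun x => (f x).toReal with hF_def
  set G : X → ℝ := fun x => (1 - ε) + ε * F x with hG_def
  have hF_nn : ∀ x, 0 ≤ F x := fun x => ENNReal.toReal_nonneg
  have hG_nn : ∀ x, 0 ≤ G x := by
    intro x
    have := hF_nn x
    have : 0 ≤ ε * F x := mul_nonneg hε0 this
    simp only [hG_def]
    linarith
  have hGeq : (fun x => (μ.rnDeriv μc x).toReal) =ᵐ[μc] G := by
    have h1 : μ.rnDeriv μc =ᵐ[μc] g := by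
      rw [hrepr]; exact Measure.rnDeriv_withDensity μc hg_meas
    filter_upwards [h1, Measure.rnDeriv_lt_top μa μc] with x hx hfx
    rw [hx, hg_def]
    simp only
    rw [ENNReal.toReal_add ofReal_ne_top (ENNReal.mul_ne_top ofReal_ne_top hfx.ne),
      ENNReal.toReal_mul, ENNReal.toReal_ofReal (by linarith), ENNReal.toReal_ofReal hε0]
  have hllr : llr μ μc =ᵐ[μc] fun x => Real.log (G x) := by
    filter_upwards [hGeq] with x hx
    rw [llr, hx]
  -- convexity pointwise
  have hconv : ∀ x, G x * Real.log (G x) ≤ ε * (F x * Real.log (F x)) := by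
    intro x
    have h1 : (1 : ℝ) ∈ Set.Ici (0 : ℝ) := Set.mem_Ici.2 zero_le_one
    have h2 : F x ∈ Set.Ici (0 : ℝ) := Set.mem_Ici.2 (hF_nn x)
    have := Real.convexOn_mul_log.2 h1 h2 (by linarith : (0:ℝ) ≤ 1 - ε) hε0 (by ring)
    simpa [hG_def, smul_eq_mul] using this
  -- transfer integrability of F log F
  have hFlog_eq : (fun x => F x * Real.log (F x)) = fun x => (μa.rnDeriv μc x).toReal • llr μa μc x := rfl
  have hFlog : Integrable (fun x => F x * Real.log (F x)) μc := by
    rw [hFlog_eq]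
    exact (integrable_rnDeriv_smul_iff hcond.1).mpr hcond.2
  have hFlog_int : ∫ x, F x * Real.log (F x) ∂μc = ∫ x, llr μa μc x ∂μa := by
    rw [hFlog_eq]
    exact integral_rnDeriv_smul hcond.1
  -- integrability of G log G
  have hG_meas : Measurable G := by
    have : Measurable F := hf_meas.ennreal_toReal
    exact measurable_const.add (this.const_mul ε)
  have hφG_meas : AEStronglyMeasurable (fun x => G x * Real.log (G x)) μc :=
    (hG_meas.mul (Real.measurable_log.comp hG_meas)).aestronglyMeasurable
  have habs : ∀ x, |G x * Real.log (G x)| ≤ 1 + ε * |F x * Real.log (F x)| := by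
    intro x
    have hub : G x * Real.log (G x) ≤ ε * (F x * Real.log (F x)) := hconv x
    have hub2 : ε * (F x * Real.log (F x)) ≤ ε * |F x * Real.log (F x)| :=
      mul_le_mul_of_nonneg_left (le_abs_self _) hε0
    have hlb : G x - 1 ≤ G x * Real.log (G x) := sub_one_le_mul_log (hG_nn x)
    have h0 : 0 ≤ ε * |F x * Real.log (F x)| := mul_nonneg hε0 (abs_nonneg _)
    rw [abs_le]
    constructor
    · have := hG_nn x; linarith
    · linarith
  have hbound_int : Integrable (fun x => 1 + ε * |F x * Real.log (F x)|) μc :=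
    (integrable_const 1).add ((hFlog.abs).const_mul ε)
  have hφG_int : Integrable (fun x => G x * Real.log (G x)) μc :=
    hbound_int.mono' hφG_meas (ae_of_all _ habs)
  -- integrability of llr μ μc over μ
  have hsm_ae : (fun x => (μ.rnDeriv μc x).toReal • llr μ μc x) =ᵐ[μc]
      (fun x => G x * Real.log (G x)) := by
    filter_upwards [hGeq, hllr] with x hx hlx
    simp [hx, hlx]
  have hint_μ : Integrable (llr μ μc) μ :=
    (integrable_rnDeriv_smul_iff hac).mp ((integrable_congr hsm_ae).mpr hφG_int)
  -- the integral bound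
  have hIμ : ∫ x, llr μ μc x ∂μ = ∫ x, G x * Real.log (G x) ∂μc := by
    rw [← integral_rnDeriv_smul hac (f := llr μ μc)]
    exact integral_congr_ae hsm_ae
  have hineq : ∫ x, llr μ μc x ∂μ ≤ ε * ∫ x, llr μa μc x ∂μa := by
    rw [hIμ, ← hFlog_int, ← integral_const_mul]
    exact integral_mono hφG_int (hFlog.const_mul ε) hconv
  -- conclude
  set I := ∫ x, llr μa μc x ∂μa with hI_def
  have hKLa : KLdiv μa μc = ENNReal.ofReal I := by rw [KLdiv, if_pos hcond]
  have hIle : I ≤ (ENNReal.ofReal I).toReal := by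
    rcases le_or_gt 0 I with h' | h'
    · rw [ENNReal.toReal_ofReal h']
    · rw [ENNReal.ofReal_of_nonpos h'.le]; simpa using h'.le
  rw [KLdiv, if_pos ⟨hac, hint_μ⟩, hKLa]
  exact ENNReal.ofReal_le_ofReal (le_trans hineq (by nlinarith [hIle]))


lemma GKLdiv_self {X : Type*} [MeasurableSpace X] (ρ : Measure X) [SigmaFinite ρ] :
    GKLdiv ρ ρ = 0 := by
  have hll : llr ρ ρ =ᵐ[ρ] 0 := by
    filter_upwards [Measure.rnDeriv_self ρ] with x hx
    simp [llr, hx]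
  have hint : Integrable (llr ρ ρ) ρ := by
    rw [integrable_congr hll]
    exact integrable_zero _ _ _
  rw [GKLdiv, if_pos ⟨Measure.AbsolutelyContinuous.rfl, hint⟩, integral_congr_ae hll]
  simp

/-- Theorem 1, specialized: with `ρ₁ = ε₁·KL(μ_a,μ_c)` and `ρ₂ = ε₂·KL(ν_a,ν_c)`,
the robust GW value is at most the GW distance between the clean distributions. -/
theorem rgw_upper_bound_tight
    {X Y : Type*}
    [MetricSpace X] [CompleteSpace X] [SecondCountableTopology X]
    [MeasurableSpace X] [BorelSpace X]
    [MetricSpace Y] [CompleteSpace Y] [SecondCountableTopology Y]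
    [MeasurableSpace Y] [BorelSpace Y]
    (μc μa : Measure X) (νc νa : Measure Y)
    [IsProbabilityMeasure μc] [IsProbabilityMeasure μa]
    [IsProbabilityMeasure νc] [IsProbabilityMeasure νa]
    (ε₁ ε₂ : ℝ) (hε₁ : ε₁ ∈ Set.Icc (0 : ℝ) 1) (hε₂ : ε₂ ∈ Set.Icc (0 : ℝ) 1)
    (μ : Measure X) (ν : Measure Y)
    (hμ : μ = ENNReal.ofReal (1 - ε₁) • μc + ENNReal.ofReal ε₁ • μa)
    (hν : ν = ENNReal.ofReal (1 - ε₂) • νc + ENNReal.ofReal ε₂ • νa)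
    (hμac_fin : KLdiv μa μc ≠ ⊤) (hμac_pos : 0 < KLdiv μa μc)
    (hνac_fin : KLdiv νa νc ≠ ⊤) (hνac_pos : 0 < KLdiv νa νc)
    (hμca_fin : KLdiv μc μa ≠ ⊤) (hνca_fin : KLdiv νc νa ≠ ⊤)
    (ρ₁ ρ₂ τ₁ τ₂ : ℝ) (hτ₁ : 0 ≤ τ₁) (hτ₂ : 0 ≤ τ₂)
    (hρ₁ : ρ₁ = ε₁ * (KLdiv μa μc).toReal)
    (hρ₂ : ρ₂ = ε₂ * (KLdiv νa νc).toReal) :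
    GWrob ρ₁ ρ₂ τ₁ τ₂ μ ν ≤ GW μc νc := by
  have hKLμ : KLdiv μ μc ≤ ENNReal.ofReal ρ₁ := by
    rw [hμ, hρ₁]
    exact KLdiv_mix μc μa hε₁.1 hε₁.2 hμac_fin
  have hKLν : KLdiv ν νc ≤ ENNReal.ofReal ρ₂ := by
    rw [hν, hρ₂]
    exact KLdiv_mix νc νa hε₂.1 hε₂.2 hνac_fin
  have step2 : Fobj τ₁ τ₂ μc νc ≤ GW μc νc := by
    rw [GW]
    refine le_iInf fun π => le_iInf fun h1 => le_iInf fun h2 => ?_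
    have hπuniv : π Set.univ = 1 := by
      have h := congrArg (fun m : Measure X => m Set.univ) h1
      simp only [Measure.map_apply measurable_fst MeasurableSet.univ, Set.preimage_univ] at h
      rw [h]
      exact measure_univ
    have hprob : IsProbabilityMeasure π := ⟨hπuniv⟩
    have hfin : IsFiniteMeasure π := inferInstance
    calc Fobj τ₁ τ₂ μc νc
        ≤ GWcost π + ENNReal.ofReal τ₁ * GKLdiv (π.map Prod.fst) μc
            + ENNReal.ofReal τ₂ * GKLdiv (π.map Prod.snd) νc := iInf₂_le π hfin
      _ = GWcost π := by
          rw [h1, h2, GKLdiv_self, GKLdiv_self, mul_zero, mul_zero, add_zero, add_zero]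
  calc GWrob ρ₁ ρ₂ τ₁ τ₂ μ ν ≤ Fobj τ₁ τ₂ μc νc := by
        rw [GWrob]
        exact iInf₂_le_of_le μc inferInstance (iInf_le_of_le hKLμ
          (iInf₂_le_of_le νc inferInstance (iInf_le_of_le hKLν le_rfl)))
    _ ≤ GW μc νc := step2
end

section
/- Let μ_c and μ_a be Borel probability measures on a Polish space X, let ε ∈ [0,1], and set μ = (1−ε)μ_c + ε·μ_a. Then for every γ ∈ [0,1]: KL(μ, (1−γ)μ + γμ_c) ≤ γ·ε·KL(μ_a, μ_c). -/
open MeasureTheory ENNReal Classical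

lemma KLdiv_self {X : Type*} [MeasurableSpace X] (ρ : Measure X) [SigmaFinite ρ] :
    KLdiv ρ ρ = 0 := by
  have h0 : llr ρ ρ =ᵐ[ρ] 0 := by
    filter_upwards [Measure.rnDeriv_self ρ] with x hx
    simp [llr, hx]
  rw [KLdiv, if_pos ⟨Measure.AbsolutelyContinuous.rfl,
      (integrable_congr h0).mpr (integrable_zero _ _ _)⟩, integral_congr_ae h0]
  simp

lemma kl_claimA {g γ : ℝ} (hg : 0 < g) (hγ0 : 0 ≤ γ) (hγ1 : γ ≤ 1) :
    Real.log g - Real.log ((1-γ)*g + γ) ≤ γ * Real.log g := by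
  have h := strictConcaveOn_log_Ioi.concaveOn.2 (Set.mem_Ioi.2 hg)
    (Set.mem_Ioi.2 one_pos) (by linarith : (0:ℝ) ≤ 1 - γ) hγ0 (by ring)
  simp only [smul_eq_mul, mul_one, Real.log_one] at h
  linarith

lemma kl_claimB {f ε : ℝ} (hf : 0 ≤ f) (hε0 : 0 ≤ ε) (hε1 : ε ≤ 1) :
    ((1-ε) + ε*f) * Real.log ((1-ε)+ε*f) ≤ ε * (f * Real.log f) := by
  have h := Real.convexOn_mul_log.2 (Set.mem_Ici.2 zero_le_one) (Set.mem_Ici.2 hf)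
    (by linarith : (0:ℝ) ≤ 1 - ε) hε0 (by ring)
  simp only [smul_eq_mul, mul_one, Real.log_one, one_mul, mul_zero] at h
  linarith

lemma kl_claimC {x : ℝ} (hx : 0 ≤ x) : x - 1 ≤ x * Real.log x := by
  rcases eq_or_lt_of_le hx with h | h
  · simp [← h]
  · have h1 := Real.log_le_sub_one_of_pos (inv_pos.2 h)
    rw [Real.log_inv] at h1
    have : 1 - x⁻¹ ≤ Real.log x := by linarith
    nlinarith [mul_pos h (inv_pos.2 h), mul_inv_cancel₀ h.ne']

lemma kl_isFiniteMeasure_ofReal_smul {X : Type*} [MeasurableSpace X] (c : ℝ) (μ : Measure X)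
    [IsFiniteMeasure μ] : IsFiniteMeasure (ENNReal.ofReal c • μ) := by
  constructor
  rw [Measure.smul_apply, smul_eq_mul]
  exact ENNReal.mul_lt_top ENNReal.ofReal_lt_top (measure_lt_top _ _)

/-- Feasibility step in the proof of Theorem 1:
`KL(μ, (1-γ)μ + γμ_c) ≤ γ ε KL(μ_a, μ_c)` for the Huber contamination `μ = (1-ε)μ_c + ε μ_a`. -/
theorem kl_contaminated_to_mixture
    {X : Type*} [MetricSpace X] [CompleteSpace X] [SecondCountableTopology X]
    [MeasurableSpace X] [BorelSpace X]
    (μc μa : Measure X) [IsProbabilityMeasure μc] [IsProbabilityMeasure μa]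
    (ε : ℝ) (hε : ε ∈ Set.Icc (0 : ℝ) 1)
    (μ : Measure X) (hμ : μ = ENNReal.ofReal (1 - ε) • μc + ENNReal.ofReal ε • μa)
    (γ : ℝ) (hγ : γ ∈ Set.Icc (0 : ℝ) 1) :
    KLdiv μ (ENNReal.ofReal (1 - γ) • μ + ENNReal.ofReal γ • μc) ≤
      ENNReal.ofReal (γ * ε) * KLdiv μa μc := by
  obtain ⟨hε0, hε1⟩ := hε
  obtain ⟨hγ0, hγ1⟩ := hγ
  have hμprob : IsProbabilityMeasure μ := by
    constructor
    rw [hμ]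
    simp only [Measure.add_apply, Measure.smul_apply, smul_eq_mul, measure_univ, mul_one]
    rw [← ENNReal.ofReal_add (by linarith) hε0]
    simp
  set ν : Measure X := ENNReal.ofReal (1 - γ) • μ + ENNReal.ofReal γ • μc with hν
  have hνprob : IsProbabilityMeasure ν := by
    constructor
    rw [hν]
    simp only [Measure.add_apply, Measure.smul_apply, smul_eq_mul, measure_univ, mul_one]
    rw [← ENNReal.ofReal_add (by linarith) hγ0]
    simp
  -- trivial case γ = 0
  by_cases hγz : γ = 0
  · have hh : ν = μ := by rw [hν, hγz]; simp
    rw [hh, KLdiv_self]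
    exact zero_le
  -- trivial case ε = 0
  by_cases hεz : ε = 0
  · have hμc : μ = μc := by rw [hμ, hεz]; simp
    have hh : ν = μ := by
      rw [hν, hμc, ← add_smul, ← ENNReal.ofReal_add (by linarith) hγ0]
      simp
    rw [hh, KLdiv_self]
    exact zero_le
  have hγpos : 0 < γ := lt_of_le_of_ne hγ0 (Ne.symm hγz)
  have hεpos : 0 < ε := lt_of_le_of_ne hε0 (Ne.symm hεz)
  by_cases hKL : μa ≪ μc ∧ Integrable (llr μa μc) μa
  swap
  · have hRHS : KLdiv μa μc = ⊤ := by rw [KLdiv, if_neg hKL]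
    rw [hRHS, ENNReal.mul_top (by
      simp only [ne_eq, ENNReal.ofReal_eq_zero, not_le]
      positivity)]
    exact le_top
  obtain ⟨hac, hint⟩ := hKL
  -- absolute continuity facts
  have hμac : μ ≪ μc := by
    rw [hμ]
    exact Measure.AbsolutelyContinuous.add_left
      (Measure.AbsolutelyContinuous.rfl.smul_left _) (hac.smul_left _)
  have hcν : μc ≪ ν := by
    intro s hs
    rw [hν] at hs
    simp only [Measure.add_apply, Measure.smul_apply, smul_eq_mul] at hs
    have h2 := (add_eq_zero.mp hs).2
    rcases mul_eq_zero.mp h2 with h | h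
    · exact absurd h (by simp [ENNReal.ofReal_eq_zero]; linarith)
    · exact h
  have hμν : μ ≪ ν := hμac.trans hcν
  -- instances for scaled measures
  have i1 : IsFiniteMeasure (ENNReal.ofReal (1-ε) • μc) := kl_isFiniteMeasure_ofReal_smul _ _
  have i2 : IsFiniteMeasure (ENNReal.ofReal ε • μa) := kl_isFiniteMeasure_ofReal_smul _ _
  have i3 : IsFiniteMeasure (ENNReal.ofReal (1-γ) • μ) := kl_isFiniteMeasure_ofReal_smul _ _
  have i4 : IsFiniteMeasure (ENNReal.ofReal γ • μc) := kl_isFiniteMeasure_ofReal_smul _ _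
  -- density computations
  have hF_lt : ∀ᵐ x ∂μc, μa.rnDeriv μc x < ∞ := Measure.rnDeriv_lt_top μa μc
  have hG_lt : ∀ᵐ x ∂μc, μ.rnDeriv μc x < ∞ := Measure.rnDeriv_lt_top μ μc
  have hG_eq : μ.rnDeriv μc =ᵐ[μc]
      fun x => ENNReal.ofReal (1-ε) + ENNReal.ofReal ε * μa.rnDeriv μc x := by
    rw [hμ]
    filter_upwards [Measure.rnDeriv_add' (ENNReal.ofReal (1-ε) • μc) (ENNReal.ofReal ε • μa) μc,
      Measure.rnDeriv_smul_left_of_ne_top μc μc (r := ENNReal.ofReal (1-ε)) ENNReal.ofReal_ne_top,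
      Measure.rnDeriv_smul_left_of_ne_top μa μc (r := ENNReal.ofReal ε) ENNReal.ofReal_ne_top,
      Measure.rnDeriv_self μc] with x h1 h2 h3 h4
    rw [h1, Pi.add_apply, h2, h3, Pi.smul_apply, Pi.smul_apply, h4, smul_eq_mul, smul_eq_mul,
      mul_one]
  have hH_eq : ν.rnDeriv μc =ᵐ[μc]
      fun x => ENNReal.ofReal (1-γ) * μ.rnDeriv μc x + ENNReal.ofReal γ := by
    rw [hν]
    filter_upwards [Measure.rnDeriv_add' (ENNReal.ofReal (1-γ) • μ) (ENNReal.ofReal γ • μc) μc,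
      Measure.rnDeriv_smul_left_of_ne_top μ μc (r := ENNReal.ofReal (1-γ)) ENNReal.ofReal_ne_top,
      Measure.rnDeriv_smul_left_of_ne_top μc μc (r := ENNReal.ofReal γ) ENNReal.ofReal_ne_top,
      Measure.rnDeriv_self μc] with x h1 h2 h3 h4
    rw [h1, Pi.add_apply, h2, h3, Pi.smul_apply, Pi.smul_apply, h4, smul_eq_mul, smul_eq_mul,
      mul_one]
  have hg_eq : ∀ᵐ x ∂μc,
      (μ.rnDeriv μc x).toReal = (1-ε) + ε * (μa.rnDeriv μc x).toReal := by
    filter_upwards [hG_eq, hF_lt] with x hx hFx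
    rw [hx, ENNReal.toReal_add ENNReal.ofReal_ne_top
        (ENNReal.mul_ne_top ENNReal.ofReal_ne_top hFx.ne),
      ENNReal.toReal_mul, ENNReal.toReal_ofReal (by linarith), ENNReal.toReal_ofReal hε0]
  have hh_eq : ∀ᵐ x ∂μc,
      (ν.rnDeriv μc x).toReal = (1-γ) * (μ.rnDeriv μc x).toReal + γ := by
    filter_upwards [hH_eq, hG_lt] with x hx hGx
    rw [hx, ENNReal.toReal_add (ENNReal.mul_ne_top ENNReal.ofReal_ne_top hGx.ne)
        ENNReal.ofReal_ne_top,
      ENNReal.toReal_mul, ENNReal.toReal_ofReal (by linarith), ENNReal.toReal_ofReal hγ0]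
  have hH_lt : ∀ᵐ x ∂μc, ν.rnDeriv μc x < ∞ := Measure.rnDeriv_lt_top ν μc
  have hGpos : ∀ᵐ x ∂μ, 0 < μ.rnDeriv μc x := Measure.rnDeriv_pos hμac
  have hGltμ : ∀ᵐ x ∂μ, μ.rnDeriv μc x < ∞ := hμac.ae_le hG_lt
  have hgpos : ∀ᵐ x ∂μ, 0 < (μ.rnDeriv μc x).toReal := by
    filter_upwards [hGpos, hGltμ] with x h1 h2
    exact ENNReal.toReal_pos h1.ne' h2.ne
  -- log-likelihood ratio identity
  have hllr_eq : llr μ ν =ᵐ[μ] fun x =>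
      Real.log (μ.rnDeriv μc x).toReal - Real.log (ν.rnDeriv μc x).toReal := by
    have hmul := Measure.rnDeriv_mul_rnDeriv (κ := μc) hμν
    filter_upwards [hμac.ae_le hmul, hgpos, hGltμ, hμac.ae_le hh_eq, hμac.ae_le hH_lt,
      hμν.ae_le (Measure.rnDeriv_lt_top μ ν)] with x hx hgx hGx hhx hHx hρx
    have hhpos : 0 < (ν.rnDeriv μc x).toReal := by
      rw [hhx]
      have : 0 ≤ (1-γ) * (μ.rnDeriv μc x).toReal :=
        mul_nonneg (by linarith) ENNReal.toReal_nonneg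
      linarith
    have htoReal : (μ.rnDeriv ν x).toReal * (ν.rnDeriv μc x).toReal
        = (μ.rnDeriv μc x).toReal := by
      rw [← ENNReal.toReal_mul]
      exact congrArg ENNReal.toReal hx
    have hratio : (μ.rnDeriv ν x).toReal
        = (μ.rnDeriv μc x).toReal / (ν.rnDeriv μc x).toReal := by
      field_simp [hhpos.ne'] at htoReal ⊢
      linarith [htoReal]
    rw [llr, hratio, Real.log_div hgx.ne' hhpos.ne']
  -- integrability
  have I1 : Integrable
      (fun x => (μa.rnDeriv μc x).toReal * Real.log (μa.rnDeriv μc x).toReal) μc := by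
    have h := (integrable_rnDeriv_smul_iff hac).mpr hint
    simpa [llr, smul_eq_mul] using h
  have hmeas_g : Measurable fun x => (μ.rnDeriv μc x).toReal :=
    (Measure.measurable_rnDeriv _ _).ennreal_toReal
  have hmeas_h : Measurable fun x => (ν.rnDeriv μc x).toReal :=
    (Measure.measurable_rnDeriv _ _).ennreal_toReal
  have I2 : Integrable
      (fun x => (μ.rnDeriv μc x).toReal * Real.log (μ.rnDeriv μc x).toReal) μc := by
    refine Integrable.mono' ((I1.abs.const_mul ε).add (integrable_const 1))
      (hmeas_g.mul (Real.measurable_log.comp hmeas_g)).aestronglyMeasurable ?_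
    filter_upwards [hg_eq] with x hx
    rw [Real.norm_eq_abs, abs_le, hx]
    set t := (μa.rnDeriv μc x).toReal with ht
    have ht0 : 0 ≤ t := ENNReal.toReal_nonneg
    have hB := kl_claimB ht0 hε0 hε1
    have hgx0 : (0:ℝ) ≤ (1-ε) + ε*t := by
      have := mul_nonneg hε0 ht0
      linarith
    have hC := kl_claimC hgx0
    have habs : ε * (t * Real.log t) ≤ ε * |t * Real.log t| :=
      mul_le_mul_of_nonneg_left (le_abs_self _) hε0
    have habs0 : 0 ≤ ε * |t * Real.log t| := mul_nonneg hε0 (abs_nonneg _)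
    constructor
    · have hub : (0:ℝ) ≤ (1-ε) + ε*t := hgx0
      simp only [Pi.add_apply]
      nlinarith
    · simp only [Pi.add_apply]
      nlinarith
  have I3 : Integrable (fun x => Real.log (μ.rnDeriv μc x).toReal) μ := by
    refine (integrable_rnDeriv_smul_iff hμac).mp ?_
    simpa [smul_eq_mul] using I2
  have I4 : Integrable (fun x => Real.log (ν.rnDeriv μc x).toReal) μ := by
    refine Integrable.mono' (I3.abs.add (integrable_const |Real.log γ|))
      (Real.measurable_log.comp hmeas_h).aestronglyMeasurable ?_
    filter_upwards [hμac.ae_le hh_eq, hgpos] with x hh hg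
    set s := (μ.rnDeriv μc x).toReal with hs
    rw [Real.norm_eq_abs, abs_le]
    have h1 : γ ≤ (1-γ)*s + γ := by nlinarith
    have hpos : 0 < (1-γ)*s + γ := lt_of_lt_of_le hγpos h1
    constructor
    · have h2 : Real.log γ ≤ Real.log ((1-γ)*s+γ) := Real.log_le_log hγpos h1
      rw [hh]
      simp only [Pi.add_apply]
      have := neg_abs_le (Real.log γ)
      have := abs_nonneg (Real.log s)
      linarith
    · rw [hh]
      simp only [Pi.add_apply]
      have hle : (1-γ)*s + γ ≤ max s 1 := by
        rcases le_total s 1 with h | h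
        · rw [max_eq_right h]; nlinarith
        · rw [max_eq_left h]; nlinarith
      have h3 : Real.log ((1-γ)*s+γ) ≤ Real.log (max s 1) := Real.log_le_log hpos hle
      have h4 : Real.log (max s 1) ≤ |Real.log s| := by
        rcases le_total s 1 with h | h
        · rw [max_eq_right h]; simp [abs_nonneg]
        · rw [max_eq_left h]; exact le_abs_self _
      have := abs_nonneg (Real.log γ)
      linarith
  have Iμν : Integrable (llr μ ν) μ := (I3.sub I4).congr hllr_eq.symm
  -- integral inequalities
  have key1 : ∫ x, llr μ ν x ∂μ ≤ γ * ∫ x, Real.log (μ.rnDeriv μc x).toReal ∂μ := by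
    rw [← integral_const_mul]
    refine integral_mono_ae Iμν (I3.const_mul γ) ?_
    filter_upwards [hllr_eq, hgpos, hμac.ae_le hh_eq] with x h1 h2 h3
    rw [h1, h3]
    exact kl_claimA h2 hγ0 hγ1
  have hr : ∫ x, llr μa μc x ∂μa
      = ∫ x, (μa.rnDeriv μc x).toReal * Real.log (μa.rnDeriv μc x).toReal ∂μc := by
    rw [← integral_rnDeriv_smul hac (f := llr μa μc)]
    simp_rw [smul_eq_mul, llr]
  have key2 : ∫ x, Real.log (μ.rnDeriv μc x).toReal ∂μ ≤ ε * ∫ x, llr μa μc x ∂μa := by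
    rw [← integral_rnDeriv_smul hμac (f := fun x => Real.log (μ.rnDeriv μc x).toReal),
      hr, ← integral_const_mul]
    refine integral_mono_ae ?_ (I1.const_mul ε) ?_
    · simpa [smul_eq_mul] using I2
    · filter_upwards [hg_eq] with x hx
      simp only [smul_eq_mul]
      rw [hx]
      exact kl_claimB ENNReal.toReal_nonneg hε0 hε1
  -- conclusion
  rw [KLdiv, if_pos ⟨hμν, Iμν⟩, KLdiv, if_pos ⟨hac, hint⟩]
  calc ENNReal.ofReal (∫ x, llr μ ν x ∂μ)
      ≤ ENNReal.ofReal (γ * ε * ∫ x, llr μa μc x ∂μa) := by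
        refine ENNReal.ofReal_le_ofReal ?_
        calc ∫ x, llr μ ν x ∂μ ≤ γ * ∫ x, Real.log (μ.rnDeriv μc x).toReal ∂μ := key1
          _ ≤ γ * (ε * ∫ x, llr μa μc x ∂μa) := mul_le_mul_of_nonneg_left key2 hγ0
          _ = γ * ε * ∫ x, llr μa μc x ∂μa := by ring
    _ = ENNReal.ofReal (γ * ε) * ENNReal.ofReal (∫ x, llr μa μc x ∂μa) :=
        ENNReal.ofReal_mul (by positivity)
end
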